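/- Let H be a finite-dimensional semisimple complex Hopf algebra, ℓ ∈ H an integral with S(ℓ) = ℓ. Then the two-fold coproduct of ℓ is invariant under cyclic permutation: ℓ_(1) ⊗ ℓ_(2) ⊗ ℓ_(3) = ℓ_(3) ⊗ ℓ_(1) ⊗ ℓ_(2), assuming the identities λ(h_(1)) h_(2) = λ(h)·1 for a dual integral λ ∈ H^* with λ(ℓ)=1 and the reconstruction identity h = λ(h ℓ_(1)) S(ℓ_(2)) for all h ∈ H. -/

import Mathlib

open TensorProduct


open TensorProduct

set_option maxHeartbeats 1000000
set_option synthInstance.maxHeartbeats 400000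

noncomputable section Stmt8Aux

namespace Stmt8Aux

section Conv

variable {R C A : Type} [CommRing R]
  [AddCommGroup C] [Module R C] [Coalgebra R C]
  [Ring A] [Algebra R A]

/-- Convolution product on linear maps from a coalgebra to an algebra. -/
def conv (f g : C →ₗ[R] A) : C →ₗ[R] A :=
  LinearMap.mul' R A ∘ₗ TensorProduct.map f g ∘ₗ Coalgebra.comul

/-- Convolution unit. -/
def convUnit : C →ₗ[R] A := Algebra.linearMap R A ∘ₗ Coalgebra.counit

lemma conv_repr (f g : C →ₗ[R] A) {c : C} {ι : Type*} (r : Coalgebra.Repr R c ι) :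
    conv f g c = ∑ i ∈ r.index, f (r.left i) * g (r.right i) := by
  simp only [conv, LinearMap.comp_apply, ← r.eq, map_sum, TensorProduct.map_tmul,
    LinearMap.mul'_apply]

lemma mul'_assoc_map :
    (LinearMap.mul' R A) ∘ₗ TensorProduct.map (LinearMap.mul' R A) LinearMap.id =
      (LinearMap.mul' R A) ∘ₗ TensorProduct.map LinearMap.id (LinearMap.mul' R A)
        ∘ₗ (TensorProduct.assoc R A A A).toLinearMap := by
  apply TensorProduct.ext_threefold
  intro a b c
  simp [mul_assoc]

lemma conv_assoc (f g h : C →ₗ[R] A) : conv (conv f g) h = conv f (conv g h) := by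
  unfold conv
  have h1 : TensorProduct.map ((LinearMap.mul' R A) ∘ₗ (TensorProduct.map f g ∘ₗ Coalgebra.comul)) h
      = TensorProduct.map (LinearMap.mul' R A) LinearMap.id
        ∘ₗ (TensorProduct.map (TensorProduct.map f g) h
        ∘ₗ TensorProduct.map Coalgebra.comul LinearMap.id) := by
    rw [← TensorProduct.map_comp, ← TensorProduct.map_comp]
    simp
  have h2 : TensorProduct.map f ((LinearMap.mul' R A) ∘ₗ (TensorProduct.map g h ∘ₗ Coalgebra.comul))
      = TensorProduct.map LinearMap.id (LinearMap.mul' R A)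
        ∘ₗ (TensorProduct.map f (TensorProduct.map g h)
        ∘ₗ TensorProduct.map LinearMap.id Coalgebra.comul) := by
    rw [← TensorProduct.map_comp, ← TensorProduct.map_comp]
    simp
  rw [h1, h2]
  -- reassociate
  have hco : (TensorProduct.map Coalgebra.comul LinearMap.id) ∘ₗ (Coalgebra.comul (R := R) (A := C))
      = (TensorProduct.assoc R C C C).symm.toLinearMap
        ∘ₗ (TensorProduct.map LinearMap.id Coalgebra.comul ∘ₗ Coalgebra.comul) := by
    have := Coalgebra.coassoc_symm (R := R) (A := C)
    -- coassoc_symm : assoc.symm ∘ₗ lTensor comul ∘ₗ comul = rTensor comul ∘ₗ comul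
    rw [← LinearMap.comp_assoc] at this ⊢
    exact this.symm
  calc (LinearMap.mul' R A)
        ∘ₗ (TensorProduct.map (LinearMap.mul' R A) LinearMap.id
        ∘ₗ ((TensorProduct.map (TensorProduct.map f g) h
        ∘ₗ TensorProduct.map Coalgebra.comul LinearMap.id) ∘ₗ Coalgebra.comul))
      = ((LinearMap.mul' R A) ∘ₗ TensorProduct.map (LinearMap.mul' R A) LinearMap.id)
        ∘ₗ TensorProduct.map (TensorProduct.map f g) h
        ∘ₗ (TensorProduct.map Coalgebra.comul LinearMap.id ∘ₗ Coalgebra.comul) := by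
        simp only [LinearMap.comp_assoc]
    _ = ((LinearMap.mul' R A) ∘ₗ TensorProduct.map (LinearMap.mul' R A) LinearMap.id)
        ∘ₗ TensorProduct.map (TensorProduct.map f g) h
        ∘ₗ (TensorProduct.assoc R C C C).symm.toLinearMap
        ∘ₗ (TensorProduct.map LinearMap.id Coalgebra.comul ∘ₗ Coalgebra.comul) := by
        rw [hco]
    _ = ((LinearMap.mul' R A) ∘ₗ TensorProduct.map (LinearMap.mul' R A) LinearMap.id)
        ∘ₗ ((TensorProduct.assoc R A A A).symm.toLinearMap
        ∘ₗ TensorProduct.map f (TensorProduct.map g h))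
        ∘ₗ (TensorProduct.map LinearMap.id Coalgebra.comul ∘ₗ Coalgebra.comul) := by
        rw [← TensorProduct.map_map_comp_assoc_symm_eq]
        simp only [LinearMap.comp_assoc]
    _ = (((LinearMap.mul' R A) ∘ₗ TensorProduct.map (LinearMap.mul' R A) LinearMap.id)
        ∘ₗ (TensorProduct.assoc R A A A).symm.toLinearMap)
        ∘ₗ TensorProduct.map f (TensorProduct.map g h)
        ∘ₗ (TensorProduct.map LinearMap.id Coalgebra.comul ∘ₗ Coalgebra.comul) := by
        simp only [LinearMap.comp_assoc]
    _ = ((LinearMap.mul' R A) ∘ₗ TensorProduct.map LinearMap.id (LinearMap.mul' R A))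
        ∘ₗ TensorProduct.map f (TensorProduct.map g h)
        ∘ₗ (TensorProduct.map LinearMap.id Coalgebra.comul ∘ₗ Coalgebra.comul) := by
        rw [mul'_assoc_map]
        simp only [LinearMap.comp_assoc, LinearEquiv.comp_coe, LinearEquiv.symm_trans_self,
          LinearEquiv.refl_toLinearMap, LinearMap.id_comp]
    _ = (LinearMap.mul' R A)
        ∘ₗ (TensorProduct.map LinearMap.id (LinearMap.mul' R A)
        ∘ₗ (TensorProduct.map f (TensorProduct.map g h)
        ∘ₗ TensorProduct.map LinearMap.id Coalgebra.comul) ∘ₗ Coalgebra.comul) := by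
        simp only [LinearMap.comp_assoc]

lemma conv_unit_left (f : C →ₗ[R] A) : conv convUnit f = f := by
  apply LinearMap.ext; intro c
  have h1 : TensorProduct.map (convUnit (R := R) (C := C) (A := A)) f
      = TensorProduct.map (Algebra.linearMap R A) f ∘ₗ TensorProduct.map (Coalgebra.counit (R := R)) LinearMap.id := by
    rw [← TensorProduct.map_comp]
    rfl
  have h2 : TensorProduct.map (Coalgebra.counit (R := R)) (LinearMap.id (M := C)) (Coalgebra.comul c) = (1 : R) ⊗ₜ[R] c :=
    Coalgebra.rTensor_counit_comul c
  simp only [conv, LinearMap.comp_apply, h1, h2,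
    TensorProduct.map_tmul, LinearMap.mul'_apply, Algebra.linearMap_apply, map_one, one_mul,
    LinearMap.id_coe, id_eq]

lemma conv_unit_right (f : C →ₗ[R] A) : conv f convUnit = f := by
  apply LinearMap.ext; intro c
  have h1 : TensorProduct.map f (convUnit (R := R) (C := C) (A := A))
      = TensorProduct.map f (Algebra.linearMap R A) ∘ₗ TensorProduct.map LinearMap.id (Coalgebra.counit (R := R)) := by
    rw [← TensorProduct.map_comp]
    rfl
  have h2 : TensorProduct.map (LinearMap.id (M := C)) (Coalgebra.counit (R := R)) (Coalgebra.comul c) = c ⊗ₜ[R] (1 : R) :=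
    Coalgebra.lTensor_counit_comul c
  simp only [conv, LinearMap.comp_apply, h1, h2,
    TensorProduct.map_tmul, LinearMap.mul'_apply, Algebra.linearMap_apply, map_one, mul_one,
    LinearMap.id_coe, id_eq]

end Conv

end Stmt8Aux

end Stmt8Aux

section Antipode

open Coalgebra HopfAlgebra

variable {H : Type} [Ring H] [HopfAlgebra ℂ H]

lemma antipode_one' : HopfAlgebra.antipode (R := ℂ) (1 : H) = 1 := by
  have := HopfAlgebra.mul_antipode_rTensor_comul_apply (R := ℂ) (1 : H)
  simpa [Algebra.TensorProduct.one_def] using this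

/-- Representation of the comultiplication of a product. -/
noncomputable def mulRepr {a b : H} {ι κ : Type*} (ra : Coalgebra.Repr ℂ a ι) (rb : Coalgebra.Repr ℂ b κ) :
    Coalgebra.Repr ℂ (a * b) (ι × κ) where
  index := ra.index ×ˢ rb.index
  left := fun p => ra.left p.1 * rb.left p.2
  right := fun p => ra.right p.1 * rb.right p.2
  eq := by
    rw [Bialgebra.comul_mul, ← ra.eq, ← rb.eq, Finset.sum_mul_sum]
    rw [Finset.sum_product]
    simp [Algebra.TensorProduct.tmul_mul_tmul]

/-- Representation of the comultiplication of a pure tensor in `H ⊗ H`. -/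
noncomputable def tmulRepr {a b : H} {ι κ : Type*} (ra : Coalgebra.Repr ℂ a ι) (rb : Coalgebra.Repr ℂ b κ) :
    Coalgebra.Repr ℂ (a ⊗ₜ[ℂ] b) (ι × κ) where
  index := ra.index ×ˢ rb.index
  left := fun p => ra.left p.1 ⊗ₜ[ℂ] rb.left p.2
  right := fun p => ra.right p.1 ⊗ₜ[ℂ] rb.right p.2
  eq := by
    have : Coalgebra.comul (R := ℂ) (a ⊗ₜ[ℂ] b)
        = TensorProduct.tensorTensorTensorComm ℂ H H H H
            (TensorProduct.map Coalgebra.comul Coalgebra.comul (a ⊗ₜ[ℂ] b)) := rfl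
    rw [this, TensorProduct.map_tmul, ← ra.eq, ← rb.eq, TensorProduct.sum_tmul]
    rw [map_sum, Finset.sum_product]
    simp [TensorProduct.tmul_sum, map_sum]

lemma antipode_mul' (a b : H) :
    HopfAlgebra.antipode (R := ℂ) (a * b)
      = HopfAlgebra.antipode (R := ℂ) b * HopfAlgebra.antipode (R := ℂ) a := by
  have key : (HopfAlgebra.antipode (R := ℂ) ∘ₗ LinearMap.mul' ℂ H : H ⊗[ℂ] H →ₗ[ℂ] H)
      = LinearMap.mul' ℂ H ∘ₗ TensorProduct.map (HopfAlgebra.antipode (R := ℂ))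
          (HopfAlgebra.antipode (R := ℂ)) ∘ₗ (TensorProduct.comm ℂ H H).toLinearMap := by
    set F : H ⊗[ℂ] H →ₗ[ℂ] H := HopfAlgebra.antipode (R := ℂ) ∘ₗ LinearMap.mul' ℂ H with hF
    set G : H ⊗[ℂ] H →ₗ[ℂ] H := LinearMap.mul' ℂ H
      ∘ₗ TensorProduct.map (HopfAlgebra.antipode (R := ℂ)) (HopfAlgebra.antipode (R := ℂ))
      ∘ₗ (TensorProduct.comm ℂ H H).toLinearMap with hG
    set M : H ⊗[ℂ] H →ₗ[ℂ] H := LinearMap.mul' ℂ H with hM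
    have claim2 : Stmt8Aux.conv F M = Stmt8Aux.convUnit := by
      apply TensorProduct.ext'
      intro u v
      have h1 := Stmt8Aux.conv_repr F M (tmulRepr (ℛ ℂ u) (ℛ ℂ v))
      have h2 := HopfAlgebra.sum_antipode_mul_eq_algebraMap_counit (R := ℂ) (mulRepr (ℛ ℂ u) (ℛ ℂ v))
      simp only [tmulRepr, mulRepr] at h1 h2
      simp only [hF, hM, LinearMap.comp_apply, LinearMap.mul'_apply] at h1
      rw [h1, h2]
      simp [Stmt8Aux.convUnit, TensorProduct.counit_tmul]
      exact Algebra.commutes _ _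
    have claim1 : Stmt8Aux.conv M G = Stmt8Aux.convUnit := by
      apply TensorProduct.ext'
      intro u v
      have h1 := Stmt8Aux.conv_repr M G (tmulRepr (ℛ ℂ u) (ℛ ℂ v))
      simp only [tmulRepr] at h1
      simp only [hM, hG, LinearMap.comp_apply, LinearEquiv.coe_coe, TensorProduct.comm_tmul,
        TensorProduct.map_tmul, LinearMap.mul'_apply] at h1
      rw [h1, Finset.sum_product]
      have hb := HopfAlgebra.sum_mul_antipode_eq_smul (R := ℂ) (ℛ ℂ v)
      have hstep : ∀ i ∈ (ℛ ℂ u).index,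
          ∑ j ∈ (ℛ ℂ v).index, (ℛ ℂ u).left i * (ℛ ℂ v).left j
              * (HopfAlgebra.antipode (R := ℂ) ((ℛ ℂ v).right j)
                * HopfAlgebra.antipode (R := ℂ) ((ℛ ℂ u).right i))
            = Coalgebra.counit (R := ℂ) v
                • ((ℛ ℂ u).left i * HopfAlgebra.antipode (R := ℂ) ((ℛ ℂ u).right i)) := by
        intro i _
        have : ∀ j ∈ (ℛ ℂ v).index, (ℛ ℂ u).left i * (ℛ ℂ v).left j
              * (HopfAlgebra.antipode (R := ℂ) ((ℛ ℂ v).right j)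
                * HopfAlgebra.antipode (R := ℂ) ((ℛ ℂ u).right i))
            = (ℛ ℂ u).left i * (((ℛ ℂ v).left j
                * HopfAlgebra.antipode (R := ℂ) ((ℛ ℂ v).right j))
                * HopfAlgebra.antipode (R := ℂ) ((ℛ ℂ u).right i)) := by
          intro j _; simp only [mul_assoc]
        rw [Finset.sum_congr rfl this, ← Finset.mul_sum, ← Finset.sum_mul, hb]
        rw [smul_mul_assoc, one_mul, mul_smul_comm]
      rw [Finset.sum_congr rfl hstep, ← Finset.smul_sum,
        HopfAlgebra.sum_mul_antipode_eq_smul (R := ℂ) (ℛ ℂ u)]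
      simp only [Stmt8Aux.convUnit, LinearMap.comp_apply,
        TensorProduct.counit_tmul, TensorProduct.map_tmul,
        LinearMap.mul'_apply, Algebra.linearMap_apply, Algebra.algebraMap_eq_smul_one, smul_smul, smul_eq_mul]
    calc F = Stmt8Aux.conv F Stmt8Aux.convUnit := (Stmt8Aux.conv_unit_right F).symm
      _ = Stmt8Aux.conv F (Stmt8Aux.conv M G) := by rw [claim1]
      _ = Stmt8Aux.conv (Stmt8Aux.conv F M) G := (Stmt8Aux.conv_assoc F M G).symm
      _ = Stmt8Aux.conv Stmt8Aux.convUnit G := by rw [claim2]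
      _ = G := Stmt8Aux.conv_unit_left G
  have := congrArg (fun φ : H ⊗[ℂ] H →ₗ[ℂ] H => φ (a ⊗ₜ[ℂ] b)) key
  simpa [LinearMap.mul'_apply] using this

end Antipode

section Trace

variable {V : Type} [AddCommGroup V] [Module ℂ V] [FiniteDimensional ℂ V]

lemma trace_formula {ι : Type} (I : Finset ι) (c : ι → (V →ₗ[ℂ] ℂ)) (w : ι → V)
    (hid : ∀ v, ∑ i ∈ I, c i v • w i = v) (f : V →ₗ[ℂ] V) :
    LinearMap.trace ℂ V f = ∑ i ∈ I, c i (f (w i)) := by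
  have hid' : (LinearMap.id : V →ₗ[ℂ] V) = ∑ i ∈ I, dualTensorHom ℂ V V (c i ⊗ₜ[ℂ] w i) := by
    apply LinearMap.ext; intro v
    simp only [LinearMap.id_coe, id_eq, LinearMap.coe_sum, Finset.sum_apply,
      dualTensorHom_apply]
    exact (hid v).symm
  have hcomp : f = ∑ i ∈ I, dualTensorHom ℂ V V (c i ⊗ₜ[ℂ] f (w i)) := by
    apply LinearMap.ext; intro v
    conv_lhs => rw [show f v = f ((LinearMap.id : V →ₗ[ℂ] V) v) from rfl, hid']
    simp only [LinearMap.coe_sum, Finset.sum_apply, dualTensorHom_apply, map_sum, map_smul]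
  conv_lhs => rw [hcomp]
  rw [map_sum]
  refine Finset.sum_congr rfl fun i _ => ?_
  have := LinearMap.ext_iff.mp (LinearMap.trace_eq_contract ℂ V) (c i ⊗ₜ[ℂ] f (w i))
  simp only [contractLeft_apply] at this
  exact this

end Trace


open Coalgebra in
/-- for a finite-dimensional semisimple complex Hopf algebra `H`
with involutive antipode, an integral `ℓ ∈ H` with `S(ℓ) = ℓ`, a dual integral
`λ ∈ H^*` satisfying `∑ λ(h₍₁₎) h₍₂₎ = λ(h)·1` and `λ(ℓ) = 1`, and the
reconstruction identity `h = ∑ λ(h ℓ₍₁₎) S(ℓ₍₂₎)`, the two-fold coproduct of `ℓ`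
is invariant under cyclic permutation: `ℓ₍₁₎ ⊗ ℓ₍₂₎ ⊗ ℓ₍₃₎ = ℓ₍₃₎ ⊗ ℓ₍₁₎ ⊗ ℓ₍₂₎`. -/
theorem stmt8 {H : Type} [Ring H] [HopfAlgebra ℂ H]
    [FiniteDimensional ℂ H] [IsSemisimpleRing H]
    (hS2 : ∀ h : H, HopfAlgebra.antipode (R := ℂ) (HopfAlgebra.antipode (R := ℂ) h) = h)
    (l : H)
    (hl : ∀ h : H, h * l = Coalgebra.counit (R := ℂ) h • l ∧
      l * h = Coalgebra.counit (R := ℂ) h • l)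
    (hSl : HopfAlgebra.antipode (R := ℂ) l = l)
    (lam : H →ₗ[ℂ] ℂ)
    (hlam : ∀ h : H,
      (TensorProduct.lid ℂ H)
        (TensorProduct.map lam LinearMap.id (Coalgebra.comul (R := ℂ) h)) = lam h • 1)
    (hlaml : lam l = 1)
    (hrec : ∀ h : H,
      (TensorProduct.lid ℂ H)
        (TensorProduct.map (lam ∘ₗ LinearMap.mulLeft ℂ h)
          (HopfAlgebra.antipode (R := ℂ)) (Coalgebra.comul (R := ℂ) l)) = h) :
    (TensorProduct.map (Coalgebra.comul (R := ℂ)) LinearMap.id)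
        (Coalgebra.comul (R := ℂ) l)
      = ((TensorProduct.assoc ℂ H H H).symm.toLinearMap ∘ₗ
          (TensorProduct.comm ℂ (H ⊗[ℂ] H) H).toLinearMap)
          ((TensorProduct.map (Coalgebra.comul (R := ℂ)) LinearMap.id)
            (Coalgebra.comul (R := ℂ) l)) := by
  classical
  set rl := ℛ ℂ l with hrl
  -- reconstruction identity in sum form
  have hrec_sum : ∀ h : H, ∑ i ∈ rl.index,
      lam (h * rl.left i) • HopfAlgebra.antipode (R := ℂ) (rl.right i) = h := by
    intro h
    have hh := hrec h
    rw [← rl.eq] at hh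
    simpa [map_sum] using hh
  have key1 : ∀ a : H, ∑ i ∈ rl.index, lam (a * rl.left i) • rl.right i
      = HopfAlgebra.antipode (R := ℂ) a := by
    intro a
    conv_rhs => rw [← hrec_sum a]
    rw [map_sum]
    refine Finset.sum_congr rfl fun i _ => ?_
    rw [map_smul, hS2]
  -- the pairing map h ↦ λ(h ⬝ -) and cancellation
  let B : H →ₗ[ℂ] Module.Dual ℂ H :=
    { toFun := fun h => lam ∘ₗ LinearMap.mulLeft ℂ h
      map_add' := by
        intro x y; apply LinearMap.ext; intro v
        simp [add_mul]
      map_smul' := by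
        intro c x; apply LinearMap.ext; intro v
        simp [smul_mul_assoc] }
  have hBinj : Function.Injective B := by
    intro u v huv
    have h0 : ∀ b : H, lam (u * b) = lam (v * b) := by
      intro b
      have := congrArg (fun φ : Module.Dual ℂ H => φ b) huv
      simpa [B] using this
    calc u = ∑ i ∈ rl.index, lam (u * rl.left i)
          • HopfAlgebra.antipode (R := ℂ) (rl.right i) := (hrec_sum u).symm
      _ = ∑ i ∈ rl.index, lam (v * rl.left i)
          • HopfAlgebra.antipode (R := ℂ) (rl.right i) := by
          refine Finset.sum_congr rfl fun i _ => by rw [h0]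
      _ = v := hrec_sum v
  have hBsurj : Function.Surjective B :=
    (LinearMap.injective_iff_surjective_of_finrank_eq_finrank
      (by rw [Subspace.dual_finrank_eq])).mp hBinj
  have cancel : ∀ u v : H, (∀ b : H, lam (b * u) = lam (b * v)) → u = v := by
    intro u v huv
    have hz : ∀ φ : Module.Dual ℂ H, φ (u - v) = 0 := by
      intro φ
      obtain ⟨b, rfl⟩ := hBsurj φ
      simp [B, mul_sub, huv b]
    exact sub_eq_zero.mp ((Module.forall_dual_apply_eq_zero_iff ℂ (u - v)).mp hz)
  -- the dual-bases identity the other way round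
  have L1 : ∀ a : H, ∑ i ∈ rl.index,
      lam (HopfAlgebra.antipode (R := ℂ) (rl.right i) * a) • rl.left i = a := by
    intro a
    refine cancel _ _ fun b => ?_
    conv_rhs => rw [← hrec_sum b]
    rw [Finset.mul_sum, Finset.sum_mul, map_sum, map_sum]
    refine Finset.sum_congr rfl fun i _ => ?_
    rw [mul_smul_comm, smul_mul_assoc, map_smul, map_smul, smul_eq_mul, smul_eq_mul, mul_comm]
  -- the element ∑ S(y i) * x i
  have z : ∑ i ∈ rl.index, HopfAlgebra.antipode (R := ℂ) (rl.right i) * rl.left i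
      = Coalgebra.counit (R := ℂ) l • 1 := by
    have z1 := HopfAlgebra.sum_antipode_mul_eq_smul (R := ℂ) rl
    have := congrArg (HopfAlgebra.antipode (R := ℂ)) z1
    rw [map_sum, map_smul, antipode_one'] at this
    rw [← this]
    refine Finset.sum_congr rfl fun i _ => ?_
    rw [antipode_mul', hS2]
  -- traces of multiplication operators
  have htr1 : ∀ a : H, LinearMap.trace ℂ H (LinearMap.mulLeft ℂ a)
      = Coalgebra.counit (R := ℂ) l * lam a := by
    intro a
    rw [trace_formula rl.index (fun i => lam ∘ₗ LinearMap.mulRight ℂ (rl.left i))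
      (fun i => HopfAlgebra.antipode (R := ℂ) (rl.right i))
      (fun v => by simpa using hrec_sum v) (LinearMap.mulLeft ℂ a)]
    calc ∑ i ∈ rl.index, (lam ∘ₗ LinearMap.mulRight ℂ (rl.left i))
          ((LinearMap.mulLeft ℂ a) (HopfAlgebra.antipode (R := ℂ) (rl.right i)))
        = ∑ i ∈ rl.index,
            lam (a * (HopfAlgebra.antipode (R := ℂ) (rl.right i) * rl.left i)) := by
          refine Finset.sum_congr rfl fun i _ => ?_
          simp [mul_assoc]
      _ = lam (a * ∑ i ∈ rl.index,
            HopfAlgebra.antipode (R := ℂ) (rl.right i) * rl.left i) := by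
          rw [Finset.mul_sum, map_sum]
      _ = Coalgebra.counit (R := ℂ) l * lam a := by
          rw [z, mul_smul_comm, mul_one, map_smul, smul_eq_mul]
  have htr2 : ∀ a : H, LinearMap.trace ℂ H (LinearMap.mulRight ℂ a)
      = Coalgebra.counit (R := ℂ) l * lam a := by
    intro a
    rw [trace_formula rl.index
      (fun i => lam ∘ₗ LinearMap.mulLeft ℂ (HopfAlgebra.antipode (R := ℂ) (rl.right i)))
      (fun i => rl.left i)
      (fun v => by simpa using L1 v) (LinearMap.mulRight ℂ a)]
    calc ∑ i ∈ rl.index, (lam ∘ₗ LinearMap.mulLeft ℂ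
            (HopfAlgebra.antipode (R := ℂ) (rl.right i)))
          ((LinearMap.mulRight ℂ a) (rl.left i))
        = ∑ i ∈ rl.index,
            lam ((HopfAlgebra.antipode (R := ℂ) (rl.right i) * rl.left i) * a) := by
          refine Finset.sum_congr rfl fun i _ => ?_
          simp [mul_assoc]
      _ = lam ((∑ i ∈ rl.index,
            HopfAlgebra.antipode (R := ℂ) (rl.right i) * rl.left i) * a) := by
          rw [Finset.sum_mul, map_sum]
      _ = Coalgebra.counit (R := ℂ) l * lam a := by
          rw [z, smul_mul_assoc, one_mul, map_smul, smul_eq_mul]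
  -- the counit of the integral is nonzero (semisimplicity)
  have hl0 : l ≠ 0 := by
    intro h
    rw [h, map_zero] at hlaml
    exact one_ne_zero hlaml.symm
  have hεl : Coalgebra.counit (R := ℂ) l ≠ 0 := by
    intro hε
    obtain ⟨q, hq⟩ := exists_isCompl (Submodule.span H {l})
    have h1 : (1 : H) ∈ Submodule.span H {l} ⊔ q := by
      rw [hq.sup_eq_top]; exact Submodule.mem_top
    obtain ⟨u, hu, v, hv, huv⟩ := Submodule.mem_sup.mp h1
    obtain ⟨h, rfl⟩ := Submodule.mem_span_singleton.mp hu
    have hlv : l = l * v := by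
      have h2 : l * (h • l) = 0 := by
        rw [smul_eq_mul, (hl h).1, mul_smul_comm, (hl l).1, hε, zero_smul, smul_zero]
      calc l = l * (h • l + v) := by rw [huv, mul_one]
        _ = l * (h • l) + l * v := mul_add _ _ _
        _ = l * v := by rw [h2, zero_add]
    have hlq : l ∈ q := by
      rw [hlv, ← smul_eq_mul]
      exact q.smul_mem l hv
    have hmem : l ∈ Submodule.span H {l} ⊓ q :=
      ⟨Submodule.mem_span_singleton_self l, hlq⟩
    rw [hq.inf_eq_bot] at hmem
    exact hl0 ((Submodule.mem_bot H).mp hmem)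
  -- λ ∘ S = λ
  have hSS : (HopfAlgebra.antipode (R := ℂ) ∘ₗ HopfAlgebra.antipode (R := ℂ)
      : H →ₗ[ℂ] H) = LinearMap.id := LinearMap.ext fun a => hS2 a
  have hlamS : ∀ a : H, lam (HopfAlgebra.antipode (R := ℂ) a) = lam a := by
    intro a
    have h1 : LinearMap.mulLeft ℂ (HopfAlgebra.antipode (R := ℂ) a)
        = HopfAlgebra.antipode (R := ℂ) ∘ₗ (LinearMap.mulRight ℂ a
            ∘ₗ HopfAlgebra.antipode (R := ℂ)) := by
      apply LinearMap.ext; intro v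
      simp [antipode_mul', hS2]
    have h2 : LinearMap.trace ℂ H (LinearMap.mulLeft ℂ (HopfAlgebra.antipode (R := ℂ) a))
        = LinearMap.trace ℂ H (LinearMap.mulRight ℂ a) := by
      rw [h1, LinearMap.trace_comp_comm', LinearMap.comp_assoc, hSS, LinearMap.comp_id]
    rw [htr1, htr2] at h2
    exact mul_left_cancel₀ hεl h2
  -- the other reconstruction identity
  have key2 : ∀ a : H, ∑ i ∈ rl.index, lam (a * rl.right i) • rl.left i
      = HopfAlgebra.antipode (R := ℂ) a := by
    intro a
    have hL := L1 (HopfAlgebra.antipode (R := ℂ) a)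
    rw [← hL]
    refine Finset.sum_congr rfl fun i _ => ?_
    rw [← antipode_mul', hlamS]
  -- reconstruction of arbitrary tensors from their first-leg pairings
  have recon : ∀ t : H ⊗[ℂ] H,
      ∑ i ∈ rl.index, rl.left i ⊗ₜ[ℂ] ((TensorProduct.lid ℂ H)
        (TensorProduct.map (lam ∘ₗ LinearMap.mulLeft ℂ
          (HopfAlgebra.antipode (R := ℂ) (rl.right i))) LinearMap.id t)) = t := by
    intro t
    induction t using TensorProduct.induction_on with
    | zero => simp
    | tmul u v =>
      simp only [TensorProduct.map_tmul, LinearMap.comp_apply, LinearMap.mulLeft_apply,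
        TensorProduct.lid_tmul, LinearMap.id_coe, id_eq]
      have hs : ∀ i ∈ rl.index, rl.left i ⊗ₜ[ℂ]
          (lam (HopfAlgebra.antipode (R := ℂ) (rl.right i) * u) • v)
          = (lam (HopfAlgebra.antipode (R := ℂ) (rl.right i) * u) • rl.left i) ⊗ₜ[ℂ] v := by
        intro i _
        rw [TensorProduct.smul_tmul]
      rw [Finset.sum_congr rfl hs, ← TensorProduct.sum_tmul, L1]
    | add t1 t2 h1 h2 =>
      simp only [map_add, TensorProduct.tmul_add, Finset.sum_add_distrib, h1, h2]
  -- cocommutativity of the coproduct of the integral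
  have cocomm : ∑ i ∈ rl.index, rl.left i ⊗ₜ[ℂ] rl.right i
      = ∑ i ∈ rl.index, rl.right i ⊗ₜ[ℂ] rl.left i := by
    have h0 := recon (∑ j ∈ rl.index, rl.right j ⊗ₜ[ℂ] rl.left j)
    rw [← h0]
    refine Finset.sum_congr rfl fun i _ => ?_
    congr 1
    simp only [map_sum, TensorProduct.map_tmul, LinearMap.comp_apply, LinearMap.mulLeft_apply,
      TensorProduct.lid_tmul, LinearMap.id_coe, id_eq]
    rw [key2, hS2]
  -- final assembly
  have hΔl : Coalgebra.comul (R := ℂ) l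
      = ∑ i ∈ rl.index, rl.left i ⊗ₜ[ℂ] rl.right i := rl.eq.symm
  have hmid : (TensorProduct.comm ℂ (H ⊗[ℂ] H) H)
      ((TensorProduct.map (Coalgebra.comul (R := ℂ)) LinearMap.id)
        (Coalgebra.comul (R := ℂ) l))
      = (Coalgebra.comul (R := ℂ) (A := H)).lTensor H (Coalgebra.comul (R := ℂ) l) := by
    conv_lhs => rw [hΔl, cocomm]
    conv_rhs => rw [hΔl]
    rw [map_sum, map_sum, map_sum]
    simp only [TensorProduct.map_tmul, LinearMap.id_coe, id_eq,
      TensorProduct.comm_tmul, LinearMap.lTensor_tmul]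
  simp only [LinearMap.comp_apply, LinearEquiv.coe_coe]
  rw [hmid, Coalgebra.coassoc_symm_apply]
  rfl
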